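/- With d = deg π, let P ∈ 𝔽_𝔭[U,V] be a nonzero homogeneous polynomial of total degree m. Then there exists a nonzero homogeneous polynomial Q ∈ 𝔽_𝔭[U,V] of total degree strictly less than m with P − Q in the ideal generated by φ̄_d − 1 if and only if φ̄_d divides P in 𝔽_𝔭[U,V]. -/

import Mathlib

open MvPolynomial

/-- The isobaric polynomials `φ_d ∈ A[U,V]` (with `A = 𝔽_q[T]`), defined by the recursion
`φ_0 = 1`, `φ_1 = U − T^q·V`, and
`φ_d = φ_{d−1}·(U − T^q·V)^{q^{d−1}} + (T^{q^{d−1}} − T)·φ_{d−2}·(U^q·V)^{q^{d−2}}` for `d ≥ 2`.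
Here `U = X 0`, `V = X 1` and `T = Polynomial.X`. -/
noncomputable def phiPoly (Fq : Type) [Field Fq] (q : ℕ) :
    ℕ → MvPolynomial (Fin 2) (Polynomial Fq)
  | 0 => 1
  | 1 => X 0 - C (Polynomial.X ^ q) * X 1
  | (d + 2) =>
      phiPoly Fq q (d + 1) * (X 0 - C (Polynomial.X ^ q) * X 1) ^ q ^ (d + 1) +
        C (Polynomial.X ^ (q ^ (d + 1)) - Polynomial.X) * phiPoly Fq q d *
          (X 0 ^ q * X 1) ^ q ^ d

section Aux

variable {R : Type*} [CommRing R] {σ : Type*}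

lemma hc_mul {φ : MvPolynomial σ R} {D : ℕ} (hφ : φ.IsHomogeneous D)
    (Rp : MvPolynomial σ R) (n : ℕ) :
    homogeneousComponent (n + D) (φ * Rp) = φ * homogeneousComponent n Rp := by
  induction Rp using MvPolynomial.induction_on' with
  | monomial u a =>
    have hm : (monomial u a).IsHomogeneous u.degree := isHomogeneous_monomial a rfl
    have e1 : homogeneousComponent (n + D) (φ * monomial u a) =
        if n + D = D + u.degree then φ * monomial u a else 0 :=
      homogeneousComponent_of_mem
        ((mem_homogeneousSubmodule _ _).mpr (hφ.mul hm))
    have e2 : homogeneousComponent n (monomial u a) =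
        if n = u.degree then monomial u a else 0 :=
      homogeneousComponent_of_mem ((mem_homogeneousSubmodule _ _).mpr hm)
    rw [e1, e2]
    by_cases h : n = u.degree
    · rw [if_pos (by omega), if_pos h]
    · rw [if_neg (by omega), if_neg h, mul_zero]
  | add p q hp hq =>
    rw [mul_add, map_add, map_add, hp, hq, mul_add]

lemma hc_mul_lt {φ : MvPolynomial σ R} {D : ℕ} (hφ : φ.IsHomogeneous D)
    (Rp : MvPolynomial σ R) {j : ℕ} (hj : j < D) :
    homogeneousComponent j (φ * Rp) = 0 := by
  induction Rp using MvPolynomial.induction_on' with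
  | monomial u a =>
    have e1 : homogeneousComponent j (φ * monomial u a) =
        if j = D + u.degree then φ * monomial u a else 0 :=
      homogeneousComponent_of_mem
        ((mem_homogeneousSubmodule _ _).mpr (hφ.mul (isHomogeneous_monomial a rfl)))
    rw [e1, if_neg (by omega)]
  | add p q hp hq =>
    rw [mul_add, map_add, hp, hq, add_zero]

end Aux

section Phi

variable (Fq : Type) [Field Fq]

lemma L_hom (q : ℕ) : (X 0 - C (Polynomial.X ^ q) * X 1 :
    MvPolynomial (Fin 2) (Polynomial Fq)).IsHomogeneous 1 := by
  simpa using (isHomogeneous_X _ 0).sub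
    ((isHomogeneous_C (Fin 2) ((Polynomial.X : Polynomial Fq) ^ q)).mul (isHomogeneous_X _ 1))

lemma M_hom (q : ℕ) : (X 0 ^ q * X 1 :
    MvPolynomial (Fin 2) (Polynomial Fq)).IsHomogeneous (q + 1) :=
  (isHomogeneous_X_pow 0 q).mul (isHomogeneous_X _ 1)

lemma phi_hom (q : ℕ) (d : ℕ) :
    (phiPoly Fq q d).IsHomogeneous (∑ i ∈ Finset.range d, q ^ i) := by
  induction d using Nat.twoStepInduction with
  | zero => simpa [phiPoly] using isHomogeneous_one (Fin 2) (Polynomial Fq)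
  | one => simpa [phiPoly] using L_hom Fq q
  | more d ih1 ih2 =>
    have h1 := ih2.mul ((L_hom Fq q).pow (q ^ (d + 1)))
    have h2 := ((isHomogeneous_C (Fin 2)
        (Polynomial.X ^ q ^ (d + 1) - Polynomial.X)).mul ih1).mul ((M_hom Fq q).pow (q ^ d))
    have e1 : (∑ i ∈ Finset.range (d + 1), q ^ i) + 1 * q ^ (d + 1) =
        ∑ i ∈ Finset.range (d + 2), q ^ i := by
      rw [Finset.sum_range_succ (n := d + 1)]; ring
    have e2 : (0 + ∑ i ∈ Finset.range d, q ^ i) + (q + 1) * q ^ d =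
        ∑ i ∈ Finset.range (d + 2), q ^ i := by
      rw [Finset.sum_range_succ (n := d + 1), Finset.sum_range_succ (n := d)]; ring
    rw [e1] at h1
    rw [e2] at h2
    exact h1.add h2

lemma phi_eval {S : Type*} [CommRing S] {q : ℕ} (hq : 0 < q)
    (f : Polynomial Fq →+* S) (d : ℕ) :
    eval (fun i => if i = 0 then (1 : S) else 0) (map f (phiPoly Fq q d)) = 1 := by
  induction d using Nat.twoStepInduction with
  | zero => simp [phiPoly]
  | one => simp [phiPoly]
  | more d ih1 ih2 =>
    simp [phiPoly, ih1, ih2, zero_pow (pow_ne_zero d hq.ne')]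

end Phi

open MvPolynomial

/-- With `d = deg π`, let `P ∈ 𝔽_𝔭[U,V]` be a nonzero homogeneous polynomial of total degree
`m`.  There exists a nonzero homogeneous polynomial `Q` of total degree `< m` with `P − Q`
in the ideal generated by `φ̄_d − 1` if and only if `φ̄_d` divides `P`. -/
theorem exists_lower_degree_iff_dvd (p r q : ℕ) (hp : p.Prime) (hodd : Odd p)
    (hr : 0 < r) (hq : q = p ^ r)
    (Fq : Type) [Field Fq] [Fintype Fq] (hcard : Fintype.card Fq = q)
    (π : Polynomial Fq) (hmonic : π.Monic) (hirr : Irreducible π)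
    (hne : π ≠ Polynomial.X)
    (P : MvPolynomial (Fin 2) (Polynomial Fq ⧸ Ideal.span {π})) (m : ℕ)
    (hP : P ≠ 0) (hPhom : P.IsHomogeneous m) :
    (∃ (Q : MvPolynomial (Fin 2) (Polynomial Fq ⧸ Ideal.span {π})) (n : ℕ),
        Q ≠ 0 ∧ Q.IsHomogeneous n ∧ n < m ∧
          P - Q ∈ Ideal.span
            {MvPolynomial.map (Ideal.Quotient.mk (Ideal.span {π}))
              (phiPoly Fq q π.natDegree) - 1}) ↔
      MvPolynomial.map (Ideal.Quotient.mk (Ideal.span {π})) (phiPoly Fq q π.natDegree)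
        ∣ P := by
  classical
  haveI hmax : (Ideal.span {π}).IsMaximal :=
    PrincipalIdealRing.isMaximal_of_irreducible hirr
  letI : Field (Polynomial Fq ⧸ Ideal.span {π}) := Ideal.Quotient.field _
  set φ := MvPolynomial.map (Ideal.Quotient.mk (Ideal.span {π}))
    (phiPoly Fq q π.natDegree) with hφdef
  set D := ∑ i ∈ Finset.range π.natDegree, q ^ i with hDdef
  have hq0 : 0 < q := hq ▸ pow_pos hp.pos r
  have hφhom : φ.IsHomogeneous D := (phi_hom Fq q π.natDegree).map _
  have hφne : φ ≠ 0 := by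
    intro h
    have heval := phi_eval Fq hq0 (Ideal.Quotient.mk (Ideal.span {π})) π.natDegree
    rw [← hφdef, h, map_zero] at heval
    exact zero_ne_one heval
  have hd1 : 1 ≤ π.natDegree := hirr.natDegree_pos
  have hD1 : 1 ≤ D := by
    calc 1 = q ^ 0 := (pow_zero q).symm
    _ ≤ D := Finset.single_le_sum (f := fun i => q ^ i)
        (fun i _ => Nat.zero_le _) (Finset.mem_range.mpr hd1)
  have hPc : ∀ j, j ≠ m → homogeneousComponent j P = 0 := by
    intro j hj
    rw [homogeneousComponent_of_mem ((mem_homogeneousSubmodule _ _).mpr hPhom), if_neg hj]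
  have hPm : homogeneousComponent m P = P := by
    rw [homogeneousComponent_of_mem ((mem_homogeneousSubmodule _ _).mpr hPhom), if_pos rfl]
  constructor
  · rintro ⟨Q, n, hQ0, hQhom, hnm, hmem⟩
    rw [Ideal.mem_span_singleton] at hmem
    obtain ⟨R, hR⟩ := hmem
    have key : φ * R = P - Q + R := by rw [hR]; ring
    have hQc : ∀ j, j ≠ n → homogeneousComponent j Q = 0 := by
      intro j hj
      rw [homogeneousComponent_of_mem ((mem_homogeneousSubmodule _ _).mpr hQhom), if_neg hj]
    have step : ∀ k, homogeneousComponent (m + (k + 1) * D) R =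
        φ * homogeneousComponent (m + k * D) R := by
      intro k
      have e1 : m + k * D + D = m + (k + 1) * D := by ring
      have h := hc_mul hφhom R (m + k * D)
      rw [e1, key, map_add, map_sub, hPc _ (by nlinarith), hQc _ (by nlinarith)] at h
      simpa using h
    have iter : ∀ k, homogeneousComponent (m + k * D) R =
        φ ^ k * homogeneousComponent m R := by
      intro k
      induction k with
      | zero => simp
      | succ k ih => rw [step k, ih, pow_succ]; ring
    have hzero : homogeneousComponent m R = 0 := by
      set K := R.totalDegree + 1 with hK
      have hKD : K ≤ K * D := Nat.le_mul_of_pos_right K hD1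
      have h0 : homogeneousComponent (m + K * D) R = 0 :=
        homogeneousComponent_eq_zero (m + K * D) R
          (lt_of_lt_of_le (Nat.lt_succ_self _) (le_trans hKD (Nat.le_add_left _ m)))
      rw [iter K] at h0
      exact (mul_eq_zero.mp h0).resolve_left (pow_ne_zero K hφne)
    by_cases hDm : D ≤ m
    · have e1 : m - D + D = m := by omega
      have h := hc_mul hφhom R (m - D)
      rw [e1, key, map_add, map_sub, hPm, hQc _ (by omega), hzero] at h
      exact ⟨homogeneousComponent (m - D) R, by simpa using h⟩
    · exfalso
      have h := hc_mul_lt hφhom R (j := m) (by omega)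
      rw [key, map_add, map_sub, hPm, hQc _ (by omega), hzero] at h
      simp only [sub_zero, add_zero] at h
      exact hP h
  · rintro ⟨R, hR⟩
    have hRne : R ≠ 0 := by
      rintro rfl
      rw [mul_zero] at hR
      exact hP hR
    have hcomp : ∀ j, j + D ≠ m → homogeneousComponent j R = 0 := by
      intro j hj
      have h := hc_mul hφhom R j
      rw [← hR, hPc _ (by omega)] at h
      exact (mul_eq_zero.mp h.symm).resolve_left hφne
    have hDm : D ≤ m := by
      by_contra hlt
      exact hRne ((sum_homogeneousComponent R).symm.trans
        (Finset.sum_eq_zero fun i _ => hcomp i (by omega)))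
    have hRhc : R = homogeneousComponent (m - D) R := by
      refine (sum_homogeneousComponent R).symm.trans ?_
      exact Finset.sum_eq_single (m - D)
        (fun b _ hb => hcomp b (by omega))
        (fun hb => by
          rw [Finset.mem_range, not_lt] at hb
          exact homogeneousComponent_eq_zero (m - D) R hb)
    refine ⟨R, m - D, hRne, ?_, by omega, ?_⟩
    · rw [hRhc]; exact homogeneousComponent_isHomogeneous (m - D) R
    · rw [Ideal.mem_span_singleton]
      exact ⟨R, by rw [hR]; ring⟩
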